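/- Let γ : I → M ⊆ ℝ^ν be a regular C² curve on a C² submanifold and γ̂_t its trace curve in H_t under the rolling tangent space. Then for every s: π(k_γ(s)) = P(s,t)(k_{γ̂_t}(s)), where k denotes the curvature vector of a regular curve and π is orthogonal projection onto T_{γ(s)}M. Consequently, k_γ(s) ⊥ T_{γ(s)}M for all s (i.e., γ is a geodesic) if and only if k_{γ̂_t} ≡ 0 (i.e., γ̂_t is a straight line). -/

import Mathlib

open scoped RealInnerProductSpace

/-- `π(k_γ(s)) = P(s,t)(k_{γ̂_t}(s))`; consequently `γ` is a geodesic
(curvature vector everywhere orthogonal to the tangent space) iff the trace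
curve `γ̂_t` is a straight line (`k_{γ̂_t} ≡ 0`). -/
theorem geodesic_iff_trace_straight {ν : ℕ} (I : Set ℝ)
    (hIopen : IsOpen I) (hIconn : I.OrdConnected)
    (γ γh : ℝ → EuclideanSpace ℝ (Fin ν))
    (hγ : ContDiff ℝ 2 γ) (hγh : ContDiff ℝ 2 γh)
    (hreg : ∀ s ∈ I, deriv γ s ≠ 0) (hregh : ∀ s ∈ I, deriv γh s ≠ 0)
    (T : ℝ → Submodule ℝ (EuclideanSpace ℝ (Fin ν)))
    (htan : ∀ s ∈ I, deriv γ s ∈ T s)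
    (t : ℝ) (ht : t ∈ I)
    (hγhtan : ∀ s ∈ I, deriv γh s ∈ T t ∧ deriv (deriv γh) s ∈ T t)
    (P : ℝ → ℝ → EuclideanSpace ℝ (Fin ν) →ₗ[ℝ] EuclideanSpace ℝ (Fin ν))
    (hrange : ∀ s ∈ I, ∀ v ∈ T t, P s t v ∈ T s)
    (hisom : ∀ s ∈ I, ∀ v ∈ T t, ‖P s t v‖ = ‖v‖)
    (hP1 : ∀ s ∈ I, P s t (deriv γh s) = deriv γ s)
    (hP2 : ∀ s ∈ I, P s t (deriv (deriv γh) s) =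
      (Submodule.orthogonalProjectionOnto (T s) (deriv (deriv γ) s) : EuclideanSpace ℝ (Fin ν)))
    (k kh : ℝ → EuclideanSpace ℝ (Fin ν))
    (hk : ∀ s, k s = (‖deriv γ s‖ ^ 2)⁻¹ •
      (deriv (deriv γ) s -
        (⟪deriv (deriv γ) s, deriv γ s⟫ / ‖deriv γ s‖ ^ 2) • deriv γ s))
    (hkh : ∀ s, kh s = (‖deriv γh s‖ ^ 2)⁻¹ •
      (deriv (deriv γh) s -
        (⟪deriv (deriv γh) s, deriv γh s⟫ / ‖deriv γh s‖ ^ 2) • deriv γh s)) :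
    (∀ s ∈ I, (Submodule.orthogonalProjectionOnto (T s) (k s) : EuclideanSpace ℝ (Fin ν)) =
        P s t (kh s)) ∧
      ((∀ s ∈ I, ∀ w ∈ T s, ⟪k s, w⟫ = 0) ↔ (∀ s ∈ I, kh s = 0)) := by
  -- inner products are preserved by P on T t (polarization)
  have hinner : ∀ s ∈ I, ∀ v ∈ T t, ∀ w ∈ T t,
      ⟪P s t v, P s t w⟫ = ⟪v, w⟫ := by
    intro s hs v hv w hw
    rw [real_inner_eq_norm_add_mul_self_sub_norm_mul_self_sub_norm_mul_self_div_two,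
      real_inner_eq_norm_add_mul_self_sub_norm_mul_self_sub_norm_mul_self_div_two v w,
      ← map_add, hisom s hs _ (Submodule.add_mem _ hv hw), hisom s hs _ hv, hisom s hs _ hw]
  have hkhmem : ∀ s ∈ I, kh s ∈ T t := by
    intro s hs
    rw [hkh]
    exact Submodule.smul_mem _ _ (Submodule.sub_mem _ (hγhtan s hs).2
      (Submodule.smul_mem _ _ (hγhtan s hs).1))
  have main : ∀ s ∈ I, (Submodule.orthogonalProjectionOnto (T s) (k s) : EuclideanSpace ℝ (Fin ν)) =
      P s t (kh s) := by
    intro s hs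
    have hn : ‖deriv γh s‖ = ‖deriv γ s‖ := by
      rw [← hP1 s hs, hisom s hs _ (hγhtan s hs).1]
    have hin : ⟪deriv (deriv γh) s, deriv γh s⟫ = ⟪deriv (deriv γ) s, deriv γ s⟫ := by
      have h1 := hinner s hs _ (hγhtan s hs).2 _ (hγhtan s hs).1
      rw [hP1 s hs, hP2 s hs] at h1
      have h2 := Submodule.starProjection_inner_eq_zero (K := T s) (deriv (deriv γ) s) (deriv γ s)
        (htan s hs)
      rw [inner_sub_left, sub_eq_zero] at h2
      rw [← h1]
      exact h2.symm
    have hproj : (Submodule.orthogonalProjectionOnto (T s) (deriv γ s) : EuclideanSpace ℝ (Fin ν)) =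
        deriv γ s := Submodule.starProjection_eq_self_iff.mpr (htan s hs)
    simp only [hk, hkh, map_smul, map_sub, hP1 s hs, hP2 s hs,
      Submodule.coe_smul, AddSubgroupClass.coe_sub, hproj, hn, hin]
  refine ⟨main, ?_, ?_⟩
  · intro hgeo s hs
    have h0 : P s t (kh s) = 0 := by
      rw [← main s hs, Submodule.orthogonalProjectionOnto_eq_zero_iff.mpr
        ((Submodule.mem_orthogonal' _ _).mpr (hgeo s hs)), Submodule.coe_zero]
    have := hisom s hs _ (hkhmem s hs)
    rw [h0, norm_zero] at this
    exact norm_eq_zero.mp this.symm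
  · intro hline s hs w hw
    have : (Submodule.orthogonalProjectionOnto (T s) (k s) : EuclideanSpace ℝ (Fin ν)) = 0 := by
      rw [main s hs, hline s hs, map_zero]
    have hmem : k s ∈ (T s)ᗮ := by
      rwa [← Submodule.orthogonalProjectionOnto_eq_zero_iff, ← Submodule.coe_eq_zero]
    exact (Submodule.mem_orthogonal' _ _).mp hmem w hw
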